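/- Let X and Y be Tychonoff spaces. The space C_p(X×Y, σ) is isomorphic (linearly homeomorphic) to the space C_p(X, C_p(Y)). -/

import Mathlib

open Filter Topology

set_option linter.unusedVariables false

/-- `C_p(X, E)`: the submodule of `X → E` (with the product, i.e. pointwise, topology)
consisting of all continuous functions from `X` to `E`.  The coerced type `↥(Cp X E)` carries
the subspace topology, i.e. the topology of pointwise convergence. -/
def Cp (X E : Type*) [TopologicalSpace X] [TopologicalSpace E]
    [AddCommGroup E] [Module ℝ E] [ContinuousAdd E] [ContinuousSMul ℝ E] :
    Submodule ℝ (X → E) where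
  carrier := {f | Continuous f}
  add_mem' hf hg := hf.add hg
  zero_mem' := continuous_const
  smul_mem' c f hf := hf.const_smul c

/-- `(c₀)_p`: the space of real sequences converging to `0`, as a submodule of `ℕ → ℝ`;
the coerced type carries the topology of pointwise convergence inherited from `ℝ^ℕ`. -/
def c0p : Submodule ℝ (ℕ → ℝ) where
  carrier := {x | Tendsto x atTop (𝓝 0)}
  add_mem' hx hy := by simpa [Pi.add_def] using Filter.Tendsto.add hx hy
  zero_mem' := tendsto_const_nhds
  smul_mem' c x hx := by simpa [Pi.smul_def, smul_eq_mul] using Filter.Tendsto.const_smul hx c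

/-- A topological vector space `E` contains a complemented copy of `F`: there is a closed
linear subspace `E₁` of `E` which is linearly homeomorphic to `F` and a continuous linear
projection from `E` onto `E₁`. -/
def HasComplementedCopy (E : Type*) [TopologicalSpace E] [AddCommGroup E] [Module ℝ E]
    (F : Type*) [TopologicalSpace F] [AddCommGroup F] [Module ℝ F] : Prop :=
  ∃ E₁ : Submodule ℝ E, IsClosed (E₁ : Set E) ∧ Nonempty (E₁ ≃L[ℝ] F) ∧
    ∃ P : E →L[ℝ] E, Set.range P = (E₁ : Set E) ∧ ∀ x ∈ E₁, P x = x

/-- A function `f : X × Y → ℝ` is separately continuous. -/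
def SepCont {X Y : Type*} [TopologicalSpace X] [TopologicalSpace Y] (f : X × Y → ℝ) : Prop :=
  (∀ x, Continuous fun y => f (x, y)) ∧ (∀ y, Continuous fun x => f (x, y))

/-- `SC_p(X × Y)`: the submodule of `X × Y → ℝ` consisting of all separately continuous
functions; the coerced type carries the topology of pointwise convergence. -/
def SCp (X Y : Type*) [TopologicalSpace X] [TopologicalSpace Y] : Submodule ℝ (X × Y → ℝ) where
  carrier := {f | SepCont f}
  add_mem' hf hg := ⟨fun x => (hf.1 x).add (hg.1 x), fun y => (hf.2 y).add (hg.2 y)⟩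
  zero_mem' := ⟨fun _ => continuous_const, fun _ => continuous_const⟩
  smul_mem' c f hf := ⟨fun x => (hf.1 x).const_smul c, fun y => (hf.2 y).const_smul c⟩

/-- The topology `σ` on `X × Y`: the coarsest topology making every separately continuous
real-valued function on `X × Y` continuous. -/
def sigmaTop (X Y : Type*) [TopologicalSpace X] [TopologicalSpace Y] :
    TopologicalSpace (X × Y) :=
  ⨅ f : {f : X × Y → ℝ // SepCont f}, TopologicalSpace.induced f.1 inferInstance

/-- The action of a finite linear combination `μ = Σ_z μ(z)·δ_z` of Dirac functionals
on a function `f`. -/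
noncomputable def finComboApply {Z : Type*} (μ : Z →₀ ℝ) (f : Z → ℝ) : ℝ :=
  μ.sum fun z a => a * f z

/-- `μ` is a JN-sequence on the topological space `Z`: each `μ n` is a finite linear
combination of Dirac functionals of norm `Σ_z |μ n z| = 1`, and `μ n (f) → 0` for every
continuous `f : Z → ℝ`. -/
def IsJNSeq (Z : Type*) [TopologicalSpace Z] (μ : ℕ → Z →₀ ℝ) : Prop :=
  (∀ n, ((μ n).sum fun _ a => |a|) = 1) ∧
    ∀ f : Z → ℝ, Continuous f → Tendsto (fun n => finComboApply (μ n) f) atTop (𝓝 0)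

/-- `Z` admits a JN-sequence. -/
def HasJNSeq (Z : Type*) [TopologicalSpace Z] : Prop := ∃ μ, IsJNSeq Z μ

/-- A space is pseudocompact if every continuous real-valued function on it is bounded. -/
def Pseudocompact (Z : Type*) [TopologicalSpace Z] : Prop :=
  ∀ f : Z → ℝ, Continuous f → Bornology.IsBounded (Set.range f)

/-- The action of a finite linear combination `Σ_{(x,y)} ν(x,y)·(δ_x ⊗ δ_y)` of tensor
products of Dirac functionals on an element of `C_p(X, C_p(Y))`. -/
noncomputable def tensorApply {X Y : Type*} [TopologicalSpace X] [TopologicalSpace Y]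
    (ν : (X × Y) →₀ ℝ) (f : ↥(Cp X ↥(Cp Y ℝ))) : ℝ :=
  ν.sum fun p a => a * (f.1 p.1).1 p.2

/-- Henriksen–Woods: the `σ`-continuous functions are exactly the separately
continuous ones. -/
theorem sigma_continuous_iff_sepCont {X Y : Type*} [TopologicalSpace X] [TopologicalSpace Y]
    (f : X × Y → ℝ) : @Continuous _ _ (sigmaTop X Y) _ f ↔ SepCont f := by
  constructor
  · intro hf
    constructor
    · intro x
      have h1 : @Continuous Y (X × Y) _ (sigmaTop X Y) (fun y => (x, y)) := by
        rw [sigmaTop, continuous_iInf_rng]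
        intro g
        rw [continuous_induced_rng]
        exact g.2.1 x
      exact @Continuous.comp Y (X × Y) ℝ _ (sigmaTop X Y) _ _ _ hf h1
    · intro y
      have h1 : @Continuous X (X × Y) _ (sigmaTop X Y) (fun x => (x, y)) := by
        rw [sigmaTop, continuous_iInf_rng]
        intro g
        rw [continuous_induced_rng]
        exact g.2.2 y
      exact @Continuous.comp X (X × Y) ℝ _ (sigmaTop X Y) _ _ _ hf h1
  · intro hf
    exact @continuous_iInf_dom _ _ f _ _ _ ⟨f, hf⟩ continuous_induced_dom

/-- For Tychonoff spaces `X` and `Y`, the space `C_p(X×Y, σ)` of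
`σ`-continuous real-valued functions on `X × Y` with the topology of pointwise convergence
is linearly homeomorphic to `C_p(X, C_p(Y))`. -/
theorem statement1 (X Y : Type*) [TopologicalSpace X] [T35Space X]
    [TopologicalSpace Y] [T35Space Y] :
    Nonempty (↥(@Cp (X × Y) ℝ (sigmaTop X Y) _ _ _ _ _) ≃L[ℝ] ↥(Cp X ↥(Cp Y ℝ))) := by
  -- membership in the σ-version of `Cp` is exactly separate continuity
  have hmem : ∀ f : X × Y → ℝ,
      f ∈ @Cp (X × Y) ℝ (sigmaTop X Y) _ _ _ _ _ ↔ SepCont f := fun f =>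
    sigma_continuous_iff_sepCont f
  -- the currying map
  refine ⟨?_⟩
  have curry_mem : ∀ f : ↥(@Cp (X × Y) ℝ (sigmaTop X Y) _ _ _ _ _),
      (fun x => (⟨fun y => f.1 (x, y), ((hmem f.1).mp f.2).1 x⟩ : ↥(Cp Y ℝ))) ∈
        Cp X ↥(Cp Y ℝ) := by
    intro f
    have hf := (hmem f.1).mp f.2
    exact Continuous.subtype_mk (continuous_pi fun y => hf.2 y) _
  have uncurry_mem : ∀ g : ↥(Cp X ↥(Cp Y ℝ)),
      (fun p : X × Y => ((g.1 p.1 : ↥(Cp Y ℝ)) : Y → ℝ) p.2) ∈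
        @Cp (X × Y) ℝ (sigmaTop X Y) _ _ _ _ _ := by
    intro g
    rw [hmem]
    constructor
    · intro x
      exact (g.1 x).2
    · intro y
      have hg : Continuous (g.1 : X → ↥(Cp Y ℝ)) := g.2
      exact (continuous_apply y).comp (continuous_subtype_val.comp hg)
  refine
    { toFun := fun f => ⟨_, curry_mem f⟩
      invFun := fun g => ⟨_, uncurry_mem g⟩
      map_add' := by
        intro f g
        apply Subtype.ext
        funext x
        apply Subtype.ext
        funext y
        rfl
      map_smul' := by
        intro c f
        apply Subtype.ext
        funext x
        apply Subtype.ext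
        funext y
        rfl
      left_inv := by
        intro f
        apply Subtype.ext
        funext p
        rfl
      right_inv := by
        intro g
        apply Subtype.ext
        funext x
        apply Subtype.ext
        funext y
        rfl
      continuous_toFun := by
        apply Continuous.subtype_mk
        apply continuous_pi
        intro x
        apply Continuous.subtype_mk
        apply continuous_pi
        intro y
        exact (continuous_apply (x, y)).comp continuous_subtype_val
      continuous_invFun := by
        apply Continuous.subtype_mk
        apply continuous_pi
        intro p
        exact (continuous_apply p.2).comp
          ((continuous_subtype_val.comp ((continuous_apply p.1).comp continuous_subtype_val)))
      }
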